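/- Let $L_1,\dots,L_n$ be affine lines over $\mathbb{F}_q$ in general position, let $d < \min(m,n)$, and for each $i$ choose $m$ distinct $\mathbb{F}_q$-rational points $P_{i1},\dots,P_{im}$ on $L_i$, all distinct and avoiding all intersection points of the lines. Then the evaluation map $e : \mathcal{F}_d \to \mathbb{F}_q^{nm}$, $f \mapsto (f(P_{ij}))_{i,j}$, is injective; in particular the resulting linear code has dimension $(d+1)(d+2)/2$. -/

import Mathlib

open MvPolynomial Polynomial

noncomputable def Phi (F : Type*) [Field F] : MvPolynomial (Fin 2) F →ₐ[F] Polynomial (Polynomial F) :=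
  MvPolynomial.aeval ![Polynomial.X, Polynomial.C Polynomial.X]

noncomputable def Psi (F : Type*) [Field F] : Polynomial (Polynomial F) →+* MvPolynomial (Fin 2) F :=
  Polynomial.eval₂RingHom (Polynomial.eval₂RingHom MvPolynomial.C (MvPolynomial.X 1)) (MvPolynomial.X 0)

theorem Psi_Phi (F : Type*) [Field F] (f : MvPolynomial (Fin 2) F) : Psi F (Phi F f) = f := by
  induction f using MvPolynomial.induction_on with
  | C r => simp [Phi, Psi, algebraMap_eq]
  | add p q hp hq => simp [map_add, hp, hq]
  | mul_X p i hp =>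
    rw [map_mul, map_mul, hp]
    congr 1
    fin_cases i <;> simp [Phi, Psi]

theorem eval_Phi (F : Type*) [Field F] (f : MvPolynomial (Fin 2) F) (x y : F) :
    Polynomial.eval₂ (Polynomial.evalRingHom y) x (Phi F f) = MvPolynomial.eval ![x, y] f := by
  induction f using MvPolynomial.induction_on with
  | C r => simp [Phi, algebraMap_eq]
  | add p q hp hq => simp [map_add, Polynomial.eval₂_add, hp, hq]
  | mul_X p i hp =>
    rw [map_mul, MvPolynomial.eval_mul, Polynomial.eval₂_mul, hp]
    congr 1
    fin_cases i <;> simp [Phi]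

theorem subst_Phi (F : Type*) [Field F] (f : MvPolynomial (Fin 2) F) (α : Polynomial F) :
    Polynomial.eval α (Phi F f) = MvPolynomial.aeval ![α, Polynomial.X] f := by
  induction f using MvPolynomial.induction_on with
  | C r => simp [Phi, algebraMap_eq]
  | add p q hp hq => simp [map_add, hp, hq]
  | mul_X p i hp =>
    rw [map_mul, map_mul, Polynomial.eval_mul, hp]
    congr 1
    fin_cases i <;> simp [Phi]

theorem factor_line_a (F : Type*) [Field F] {D m : ℕ} (hm : D < m) (a b c : F) (ha : a ≠ 0)
    (f : MvPolynomial (Fin 2) F) (hdeg : f.totalDegree ≤ D)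
    (pts : Fin m → F × F) (hinj : Function.Injective pts)
    (hon : ∀ j, a * (pts j).1 + b * (pts j).2 + c = 0)
    (hev : ∀ j, MvPolynomial.eval ![(pts j).1, (pts j).2] f = 0) :
    ∃ g, f = (MvPolynomial.C a * MvPolynomial.X 0 + MvPolynomial.C b * MvPolynomial.X 1
      + MvPolynomial.C c) * g := by
  set α : Polynomial F := Polynomial.C (-c/a) + Polynomial.C (-b/a) * Polynomial.X with hα
  set q := Phi F f with hq
  have hudeg : (q.eval α).natDegree ≤ D := by
    rw [subst_Phi]
    have := MvPolynomial.aeval_natDegree_le f hdeg ![α, Polynomial.X] (n := 1) ?_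
    · simpa using this
    · intro i; fin_cases i
      · simp only [Matrix.cons_val_zero]
        refine (Polynomial.natDegree_add_le _ _).trans ?_
        simp [Polynomial.natDegree_C]
        exact (Polynomial.natDegree_C_mul_le _ _).trans (by simp)
      · simp
  have hx : ∀ j, (pts j).1 = α.eval (pts j).2 := by
    intro j
    simp only [hα, Polynomial.eval_add, Polynomial.eval_mul, Polynomial.eval_C, Polynomial.eval_X]
    field_simp
    linear_combination hon j
  have hroots : ∀ j, (q.eval α).eval ((pts j).2) = 0 := by
    intro j
    have h1 := Polynomial.eval₂_hom (p := q) (Polynomial.evalRingHom ((pts j).2)) α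
    simp only [Polynomial.coe_evalRingHom] at h1
    rw [← hx j] at h1
    rw [← h1, eval_Phi]
    exact hev j
  have hu : q.eval α = 0 := by
    apply Polynomial.eq_zero_of_natDegree_lt_card_of_eval_eq_zero _
      (f := fun j : Fin m => (pts j).2) ?_ hroots (lt_of_le_of_lt hudeg (by simpa using hm))
    intro j k h
    apply hinj
    simp only at h
    exact Prod.ext (by rw [hx, hx, h]) h
  obtain ⟨h, hfact⟩ := (Polynomial.dvd_iff_isRoot.mpr hu)
  have e1 : Psi F (Polynomial.X - Polynomial.C α) =
      MvPolynomial.X 0 - (MvPolynomial.C (-c/a) + MvPolynomial.C (-b/a) * MvPolynomial.X 1) := by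
    simp [Psi, hα]
  have hCa : (MvPolynomial.C a : MvPolynomial (Fin 2) F) * MvPolynomial.C a⁻¹ = 1 := by
    rw [← MvPolynomial.C_mul, mul_inv_cancel₀ ha, MvPolynomial.C_1]
  have hc : a * (-c/a) = -c := by field_simp
  have hb : a * (-b/a) = -b := by field_simp
  have e2 : MvPolynomial.C a *
      (MvPolynomial.X 0 - (MvPolynomial.C (-c/a) + MvPolynomial.C (-b/a) * MvPolynomial.X 1))
      = (MvPolynomial.C a * MvPolynomial.X 0 + MvPolynomial.C b * MvPolynomial.X 1
        + MvPolynomial.C c : MvPolynomial (Fin 2) F) := by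
    rw [mul_sub, mul_add, ← mul_assoc, ← MvPolynomial.C_mul, ← MvPolynomial.C_mul, hc, hb,
      map_neg, map_neg]
    ring
  refine ⟨MvPolynomial.C a⁻¹ * Psi F h, ?_⟩
  have hf : f = (MvPolynomial.X 0
      - (MvPolynomial.C (-c/a) + MvPolynomial.C (-b/a) * MvPolynomial.X 1)) * Psi F h := by
    conv_lhs => rw [← Psi_Phi F f, ← hq, hfact]
    rw [map_mul, e1]
  rw [hf, ← e2]
  linear_combination (-((MvPolynomial.X 0
      - (MvPolynomial.C (-c/a) + MvPolynomial.C (-b/a) * MvPolynomial.X 1)) * Psi F h)) * hCa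

theorem factor_line (F : Type*) [Field F] {D m : ℕ} (hm : D < m) (a b c : F)
    (hab : ¬(a = 0 ∧ b = 0))
    (f : MvPolynomial (Fin 2) F) (hdeg : f.totalDegree ≤ D)
    (pts : Fin m → F × F) (hinj : Function.Injective pts)
    (hon : ∀ j, a * (pts j).1 + b * (pts j).2 + c = 0)
    (hev : ∀ j, MvPolynomial.eval ![(pts j).1, (pts j).2] f = 0) :
    ∃ g, f = (MvPolynomial.C a * MvPolynomial.X 0 + MvPolynomial.C b * MvPolynomial.X 1
      + MvPolynomial.C c) * g := by
  by_cases ha : a ≠ 0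
  · exact factor_line_a F hm a b c ha f hdeg pts hinj hon hev
  · push_neg at ha
    have hb : b ≠ 0 := fun h => hab ⟨ha, h⟩
    -- swap coordinates
    set e : Fin 2 ≃ Fin 2 := Equiv.swap 0 1 with he
    have hee : ∀ v : Fin 2 → F, (v ∘ e) = ![v 1, v 0] := by
      intro v; funext i; fin_cases i <;> simp [he, Equiv.swap_apply_left, Equiv.swap_apply_right]
    have hdeg' : (MvPolynomial.rename e f).totalDegree ≤ D :=
      (MvPolynomial.totalDegree_rename_le e f).trans hdeg
    obtain ⟨g, hg⟩ := factor_line_a F hm b a c hb (MvPolynomial.rename e f) hdeg'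
        (fun j => ((pts j).2, (pts j).1))
        (fun j k h => hinj (Prod.ext (congrArg Prod.snd h) (congrArg Prod.fst h)))
        (fun j => by linear_combination hon j)
        (fun j => by
          rw [MvPolynomial.eval_rename]
          rw [show (![(pts j).2, (pts j).1] ∘ e) = ![(pts j).1, (pts j).2] by
            have := hee ![(pts j).2, (pts j).1]; simpa using this]
          exact hev j)
    refine ⟨MvPolynomial.rename e g, ?_⟩
    have : MvPolynomial.rename e (MvPolynomial.rename e f) = f := by
      rw [MvPolynomial.rename_rename]
      rw [show ((e : Fin 2 → Fin 2) ∘ e) = id by funext i; simp [he]]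
      exact MvPolynomial.rename_id_apply f
    rw [← this, hg, map_mul]
    congr 1
    simp only [map_add, map_mul, MvPolynomial.rename_C, MvPolynomial.rename_X]
    rw [show e 0 = 1 by simp [he], show e 1 = 0 by simp [he]]
    ring

theorem deg_drop (F : Type*) [Field F] {D : ℕ} (a b c : F) (hab : ¬(a = 0 ∧ b = 0))
    (g : MvPolynomial (Fin 2) F) (hg : g ≠ 0)
    (hdeg : ((MvPolynomial.C a * MvPolynomial.X 0 + MvPolynomial.C b * MvPolynomial.X 1
      + MvPolynomial.C c) * g).totalDegree ≤ D) :
    g.totalDegree + 1 ≤ D := by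
  set l1 : MvPolynomial (Fin 2) F := MvPolynomial.C a * MvPolynomial.X 0
    + MvPolynomial.C b * MvPolynomial.X 1 with hl1
  have hl1hom : l1.IsHomogeneous 1 :=
    (MvPolynomial.isHomogeneous_C_mul_X a 0).add (MvPolynomial.isHomogeneous_C_mul_X b 1)
  have hl1ne : l1 ≠ 0 := by
    intro h
    rcases not_and_or.mp hab with ha | hb
    · apply ha
      have := congrArg (MvPolynomial.coeff (Finsupp.single 0 1)) h
      simpa [hl1, MvPolynomial.coeff_C_mul, MvPolynomial.coeff_X', Finsupp.single_left_inj] using this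
    · apply hb
      have := congrArg (MvPolynomial.coeff (Finsupp.single 1 1)) h
      simpa [hl1, MvPolynomial.coeff_C_mul, MvPolynomial.coeff_X', Finsupp.single_left_inj] using this
  set k := g.totalDegree with hk
  -- the top homogeneous component of g is nonzero
  have hcomp : MvPolynomial.homogeneousComponent k g ≠ 0 := by
    obtain ⟨d, hd, hdeq⟩ := Finset.exists_mem_eq_sup g.support
      (MvPolynomial.support_nonempty.mpr hg) (fun d => d.sum fun _ e => e)
    intro h0
    have := congrArg (MvPolynomial.coeff d) h0
    rw [MvPolynomial.coeff_homogeneousComponent] at this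
    rw [if_pos] at this
    · exact MvPolynomial.mem_support_iff.mp hd (by simpa using this)
    · show d.degree = k
      rw [hk, MvPolynomial.totalDegree, hdeq]
      rfl
  -- homogeneousComponent (k+1) of the product equals l1 * (homogeneousComponent k g)
  have key : MvPolynomial.homogeneousComponent (k+1) ((l1 + MvPolynomial.C c) * g)
      = l1 * MvPolynomial.homogeneousComponent k g := by
    conv_lhs => rw [← MvPolynomial.sum_homogeneousComponent g]
    rw [add_mul, Finset.mul_sum, Finset.mul_sum, map_add, map_sum, map_sum]
    have h1 : ∀ i ∈ Finset.range (g.totalDegree + 1),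
        MvPolynomial.homogeneousComponent (k+1) (l1 * MvPolynomial.homogeneousComponent i g)
        = if k + 1 = 1 + i then l1 * MvPolynomial.homogeneousComponent i g else 0 := by
      intro i _
      exact MvPolynomial.homogeneousComponent_of_mem
        ((MvPolynomial.mem_homogeneousSubmodule _ _).mpr
          (hl1hom.mul (MvPolynomial.homogeneousComponent_isHomogeneous i g)))
    have h2 : ∀ i ∈ Finset.range (g.totalDegree + 1),
        MvPolynomial.homogeneousComponent (k+1) (MvPolynomial.C c
          * MvPolynomial.homogeneousComponent i g) = 0 := by
      intro i hi
      rw [MvPolynomial.homogeneousComponent_C_mul,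
        MvPolynomial.homogeneousComponent_of_mem
          ((MvPolynomial.mem_homogeneousSubmodule _ _).mpr
            (MvPolynomial.homogeneousComponent_isHomogeneous i g)),
        if_neg, mul_zero]
      have := Finset.mem_range.mp hi
      omega
    rw [Finset.sum_congr rfl h1, Finset.sum_congr rfl h2, Finset.sum_const_zero, add_zero]
    have h3 : ∀ x ∈ Finset.range (g.totalDegree + 1),
        (if k + 1 = 1 + x then l1 * MvPolynomial.homogeneousComponent x g else 0)
        = if x = k then l1 * MvPolynomial.homogeneousComponent x g else 0 := fun x _ => by
      simp only [show (k + 1 = 1 + x) ↔ (x = k) by omega]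
    rw [Finset.sum_congr rfl h3]
    rw [Finset.sum_ite_eq' (Finset.range (g.totalDegree + 1))
      k (fun x => l1 * MvPolynomial.homogeneousComponent x g)]
    rw [if_pos (Finset.mem_range.mpr (by omega))]
  have hne : l1 * MvPolynomial.homogeneousComponent k g ≠ 0 := mul_ne_zero hl1ne hcomp
  by_contra hlt
  have hsmall : ((l1 + MvPolynomial.C c) * g).totalDegree < k + 1 := by omega
  have := MvPolynomial.homogeneousComponent_eq_zero _ _ hsmall
  rw [key] at this
  exact hne this

theorem vanish (F : Type*) [Field F] (n m : ℕ) (a b c : Fin n → F)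
    (hab : ∀ i, (a i, b i) ≠ (0, 0))
    (P : Fin n → Fin m → F × F)
    (hPinj : Function.Injective (fun q : Fin n × Fin m => P q.1 q.2))
    (hPon : ∀ i j, a i * (P i j).1 + b i * (P i j).2 + c i = 0)
    (hPavoid : ∀ i j i', i' ≠ i → a i' * (P i j).1 + b i' * (P i j).2 + c i' ≠ 0) :
    ∀ D : ℕ, D < n → D < m → ∀ f : MvPolynomial (Fin 2) F, f.totalDegree ≤ D →
      (∀ i : Fin n, (i : ℕ) ≤ D → ∀ j, MvPolynomial.eval ![(P i j).1, (P i j).2] f = 0) →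
      f = 0 := by
  intro D
  induction D with
  | zero =>
    intro hn hm f hdeg hev
    have hf : f = MvPolynomial.C (MvPolynomial.coeff 0 f) := by
      ext d
      rcases eq_or_ne d 0 with rfl | hd
      · simp
      · rw [MvPolynomial.coeff_C, if_neg (Ne.symm hd)]
        apply MvPolynomial.coeff_eq_zero_of_totalDegree_lt
        obtain ⟨i, hi⟩ := Finsupp.support_nonempty_iff.mpr hd
        have h1 : 1 ≤ d i := Nat.one_le_iff_ne_zero.mpr (Finsupp.mem_support_iff.mp hi)
        have : 1 ≤ ∑ j ∈ d.support, d j := le_trans h1 (Finset.single_le_sum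
          (fun _ _ => Nat.zero_le _) hi)
        omega
    have := hev ⟨0, hn⟩ (by simp) ⟨0, hm⟩
    rw [hf] at this ⊢
    simpa using this
  | succ D ih =>
    intro hn hm f hdeg hev
    set i₀ : Fin n := ⟨D + 1, hn⟩ with hi₀
    have hinj0 : Function.Injective (P i₀) := by
      intro j k h
      have := hPinj (a₁ := (i₀, j)) (a₂ := (i₀, k)) (by simpa using h)
      simpa using this
    obtain ⟨g, hg⟩ := factor_line F hm (a i₀) (b i₀) (c i₀)
      (fun h => hab i₀ (by simp [h.1, h.2]))
      f hdeg (P i₀) hinj0 (fun j => hPon i₀ j) (fun j => hev i₀ (by simp [hi₀]) j)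
    rcases eq_or_ne g 0 with rfl | hgne
    · rw [hg, mul_zero]
    have hgdeg : g.totalDegree ≤ D := by
      have := deg_drop F (a i₀) (b i₀) (c i₀)
        (fun h => hab i₀ (by simp [h.1, h.2])) g hgne (hg ▸ hdeg)
      omega
    have hgev : ∀ i : Fin n, (i : ℕ) ≤ D → ∀ j,
        MvPolynomial.eval ![(P i j).1, (P i j).2] g = 0 := by
      intro i hi j
      have hne : i₀ ≠ i := by
        intro h
        rw [← h] at hi
        simp [hi₀] at hi
      have hev2 := hev i (by omega) j
      rw [hg] at hev2
      rw [MvPolynomial.eval_mul] at hev2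
      have hl : MvPolynomial.eval ![(P i j).1, (P i j).2]
          (MvPolynomial.C (a i₀) * MvPolynomial.X 0 + MvPolynomial.C (b i₀) * MvPolynomial.X 1
            + MvPolynomial.C (c i₀)) = a i₀ * (P i j).1 + b i₀ * (P i j).2 + c i₀ := by
        simp
      rw [hl] at hev2
      exact (mul_eq_zero.mp hev2).resolve_left (hPavoid i j i₀ hne)
    have := ih (by omega) (by omega) g hgdeg hgev
    rw [hg, this, mul_zero]

theorem dim_count (F : Type*) [Field F] (d : ℕ) :
    Module.finrank F (MvPolynomial.restrictTotalDegree (Fin 2) F d) = (d + 1) * (d + 2) / 2 := by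
  classical
  set S : Set (Fin 2 →₀ ℕ) := { s | (s.sum fun _ e => e) ≤ d } with hS
  have bas : Module.Basis S F (MvPolynomial.restrictTotalDegree (Fin 2) F d) :=
    MvPolynomial.basisRestrictSupport F S
  set T : Finset (ℕ × ℕ) := (Finset.range (d+1)).biUnion (fun k => Finset.HasAntidiagonal.antidiagonal k) with hT
  have hmemT : ∀ p : ℕ × ℕ, p ∈ T ↔ p.1 + p.2 ≤ d := by
    intro p
    simp only [hT, Finset.mem_biUnion, Finset.mem_range, Finset.HasAntidiagonal.mem_antidiagonal]
    constructor
    · rintro ⟨k, hk, rfl⟩; omega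
    · intro h; exact ⟨p.1 + p.2, by omega, rfl⟩
  have hsum : ∀ s : Fin 2 →₀ ℕ, (s.sum fun _ e => e) = s 0 + s 1 := by
    intro s
    rw [Finsupp.sum_fintype _ _ (fun _ => rfl), Fin.sum_univ_two]
  have E1 : S ≃ {p : ℕ × ℕ // p.1 + p.2 ≤ d} :=
    Equiv.subtypeEquiv (Finsupp.equivFunOnFinite.trans (finTwoArrowEquiv ℕ)) (fun s => by
      simp [hS, hsum s, finTwoArrowEquiv])
  have E : S ≃ {p : ℕ × ℕ // p ∈ T} :=
    E1.trans (Equiv.subtypeEquivRight (fun p => (hmemT p).symm))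
  letI : Fintype S := Fintype.ofEquiv _ E.symm
  rw [Module.finrank_eq_card_basis bas, Fintype.card_congr E, Fintype.card_coe]
  have hdisj : ∀ x ∈ Finset.range (d+1), ∀ y ∈ Finset.range (d+1), x ≠ y →
      Disjoint (Finset.HasAntidiagonal.antidiagonal x) (Finset.HasAntidiagonal.antidiagonal y) := by
    intro x _ y _ hxy
    refine Finset.disjoint_left.mpr ?_
    intro p hp hq
    rw [Finset.HasAntidiagonal.mem_antidiagonal] at hp hq
    omega
  rw [hT, Finset.card_biUnion hdisj]
  have : ∀ k ∈ Finset.range (d+1), (Finset.HasAntidiagonal.antidiagonal k).card = k + 1 := by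
    intro k _; exact Finset.Nat.card_antidiagonal k
  rw [Finset.sum_congr rfl this]
  have h1 : ∑ k ∈ Finset.range (d+1), (k+1) = ∑ k ∈ Finset.range (d+2), k := by
    rw [Finset.sum_range_succ' (fun i => i) (d+1)]
    simp
  rw [h1, Finset.sum_range_id]
  congr 1
  have h2 : d + 2 - 1 = d + 1 := rfl
  rw [h2]
  ring

/-- For `n` lines in general position with `m` marked distinct rational
points on each (avoiding intersection points) and `d < min(m,n)`, the evaluation map
`e : F_d → F^{nm}` is injective; in particular the code has dimension `(d+1)(d+2)/2`. -/
theorem stmt_4 {F : Type*} [Field F] (n m d : ℕ) (hdm : d < m) (hdn : d < n)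
    (a b c : Fin n → F) (hab : ∀ i, (a i, b i) ≠ (0, 0))
    (hdist : ∀ i j : Fin n, i ≠ j →
      {p : F × F | a i * p.1 + b i * p.2 + c i = 0} ≠
        {p : F × F | a j * p.1 + b j * p.2 + c j = 0})
    (hgen : ∀ i j k : Fin n, i ≠ j → i ≠ k → j ≠ k →
      ¬∃ p : F × F, a i * p.1 + b i * p.2 + c i = 0 ∧
        a j * p.1 + b j * p.2 + c j = 0 ∧ a k * p.1 + b k * p.2 + c k = 0)
    (P : Fin n → Fin m → F × F)
    (hPinj : Function.Injective (fun q : Fin n × Fin m => P q.1 q.2))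
    (hPon : ∀ i j, a i * (P i j).1 + b i * (P i j).2 + c i = 0)
    (hPavoid : ∀ i j i', i' ≠ i → a i' * (P i j).1 + b i' * (P i j).2 + c i' ≠ 0) :
    Function.Injective
      (fun f : MvPolynomial.restrictTotalDegree (Fin 2) F d =>
        (fun q : Fin n × Fin m =>
          MvPolynomial.eval ![(P q.1 q.2).1, (P q.1 q.2).2]
            (f : MvPolynomial (Fin 2) F))) ∧
    Module.finrank F (MvPolynomial.restrictTotalDegree (Fin 2) F d) =
      (d + 1) * (d + 2) / 2 := by
  constructor
  · intro f₁ f₂ hf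
    have hmem : ((f₁ : MvPolynomial (Fin 2) F) - (f₂ : MvPolynomial (Fin 2) F)).totalDegree ≤ d :=
      (MvPolynomial.mem_restrictTotalDegree _ _ _).mp (Submodule.sub_mem _ f₁.2 f₂.2)
    have hev : ∀ i : Fin n, (i : ℕ) ≤ d → ∀ j,
        MvPolynomial.eval ![(P i j).1, (P i j).2]
          ((f₁ : MvPolynomial (Fin 2) F) - (f₂ : MvPolynomial (Fin 2) F)) = 0 := by
      intro i _ j
      rw [map_sub, sub_eq_zero]
      exact congrFun hf (i, j)
    have hz := vanish F n m a b c hab P hPinj hPon hPavoid d hdn hdm _ hmem hev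
    exact Subtype.ext (sub_eq_zero.mp hz)
  · exact dim_count F d
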